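/- Fix real numbers m ≠ 0 and ℏ > 0. For v, w ∈ ℝ³ and t₀ ∈ ℝ define the map T_{v,w,t₀} : ℝ³ × ℝ × ℂ → ℝ³ × ℝ × ℂ by T_{v,w,t₀}(y,t,z) = ( y + v·(t + t₀) + w, t + t₀, exp((i·m/ℏ)(⟨y,v⟩ + (t/2)‖v‖²))·z ). Then for all v, v', w, w' ∈ ℝ³ and t₀, t₀' ∈ ℝ, the composition satisfies T_{v',w',t₀'} ∘ T_{v,w,t₀} (y,t,z) = T_{v+v',\; w+w'−v·t₀',\; t₀+t₀'} (y,t, z₀·z) for all (y,t,z), where z₀ = exp( (i·m/ℏ)( t₀·⟨v,v'⟩ + ⟨w,v'⟩ + (t₀/2)‖v'‖² ) ) is a constant of modulus 1 independent of (y,t,z). In particular, the family T_{v,w,t₀} satisfies the cocycle condition up to multiplication by constant phases (it is a projective cocycle). -/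

import Mathlib

open scoped BigOperators

/-- The transition map `T_{v,w,t₀}(y,t,z) =
`(y + v·(t+t₀) + w, t + t₀, exp((i·m/ℏ)(⟨y,v⟩ + (t/2)‖v‖²))·z)` of the Schrödinger
principal bundle, in coordinates. -/
noncomputable def Ttrans (m hbar : ℝ) (v w : Fin 3 → ℝ) (t0 : ℝ)
    (p : (Fin 3 → ℝ) × ℝ × ℂ) : (Fin 3 → ℝ) × ℝ × ℂ :=
  (p.1 + (p.2.1 + t0) • v + w, p.2.1 + t0,
    Complex.exp (Complex.I * m / hbar *
      (((∑ k : Fin 3, p.1 k * v k : ℝ) : ℂ)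
        + ((p.2.1 / 2 : ℝ) : ℂ) * ((∑ k : Fin 3, v k * v k : ℝ) : ℂ))) * p.2.2)

/-- The constant phase `z₀ = exp((i·m/ℏ)(t₀·⟨v,v'⟩ + ⟨w,v'⟩ + (t₀/2)‖v'‖²))`. -/
noncomputable def z0const (m hbar : ℝ) (v v' w : Fin 3 → ℝ) (t0 : ℝ) : ℂ :=
  Complex.exp (Complex.I * m / hbar *
    (((t0 * ∑ k : Fin 3, v k * v' k : ℝ) : ℂ)
      + ((∑ k : Fin 3, w k * v' k : ℝ) : ℂ)
      + ((t0 / 2 : ℝ) : ℂ) * ((∑ k : Fin 3, v' k * v' k : ℝ) : ℂ)))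

/-- The transition maps of the Schrödinger principal bundle form a projective cocycle:
`T_{v',w',t₀'} ∘ T_{v,w,t₀} (y,t,z) = T_{v+v', w+w'−v·t₀', t₀+t₀'} (y,t, z₀·z)`, where
`z₀ = exp((i·m/ℏ)(t₀·⟨v,v'⟩ + ⟨w,v'⟩ + (t₀/2)‖v'‖²))` is a constant of modulus `1`
independent of `(y,t,z)`. -/
theorem Ttrans_projective_cocycle
    (m hbar : ℝ) (hm : m ≠ 0) (hh : 0 < hbar)
    (v v' w w' : Fin 3 → ℝ) (t0 t0' : ℝ) :
    ‖z0const m hbar v v' w t0‖ = 1 ∧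
    ∀ p : (Fin 3 → ℝ) × ℝ × ℂ,
      Ttrans m hbar v' w' t0' (Ttrans m hbar v w t0 p)
      = Ttrans m hbar (v + v') (w + w' - t0' • v) (t0 + t0')
          (p.1, p.2.1, z0const m hbar v v' w t0 * p.2.2) := by
  constructor
  · have h : z0const m hbar v v' w t0
      = Complex.exp ((((m / hbar) * (t0 * ∑ k : Fin 3, v k * v' k
          + ∑ k : Fin 3, w k * v' k
          + t0 / 2 * ∑ k : Fin 3, v' k * v' k) : ℝ) : ℂ) * Complex.I) := by
      rw [z0const]; push_cast; ring_nf
    rw [h, Complex.norm_exp_ofReal_mul_I]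
  · rintro ⟨y, t, z⟩
    refine Prod.ext ?_ (Prod.ext ?_ ?_)
    · funext i
      simp only [Ttrans, Pi.add_apply, Pi.smul_apply, Pi.sub_apply, smul_eq_mul]
      ring
    · simp only [Ttrans]; ring
    · simp only [Ttrans, z0const, Pi.add_apply, Pi.smul_apply, smul_eq_mul,
        mul_add, add_mul, Finset.sum_add_distrib]
      rw [← mul_assoc, ← Complex.exp_add,
        ← mul_assoc (Complex.exp _) (Complex.exp _) z, ← Complex.exp_add]
      congr 1
      have hs : ∑ x : Fin 3, v' x * v x = ∑ x : Fin 3, v x * v' x :=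
        Finset.sum_congr rfl (fun _ _ => mul_comm _ _)
      have h1 : ∑ x : Fin 3, t * v x * v' x = t * ∑ x : Fin 3, v x * v' x := by
        rw [Finset.mul_sum]; exact Finset.sum_congr rfl (fun _ _ => by ring)
      have h2 : ∑ x : Fin 3, t0 * v x * v' x = t0 * ∑ x : Fin 3, v x * v' x := by
        rw [Finset.mul_sum]; exact Finset.sum_congr rfl (fun _ _ => by ring)
      rw [hs, h1, h2]; push_cast; ring
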